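/- Let G be a group generated by a finite symmetric set S, let p be a real with 2 ≥ p > 1 (or more generally p > 1), and let d > p. Suppose G satisfies condition S_d: there exists C > 0 such that for all finitely supported f : G → ℝ, ‖f‖_{d/(d−1)} ≤ C ∑_{g∈G} ∑_{s∈S} |f(gs⁻¹) − f(g)|. Then there exists C' > 0 such that for all finitely supported f : G → ℝ, ‖f‖_{pd/(d−p)} ≤ C' (∑_{s∈S} ∑_{g∈G} |f(gs⁻¹) − f(g)|^p)^{1/p}. -/

import Mathlib

/-- Mean value type bound: `|x^α - y^α| ≤ α ((x^{α-1} + y^{α-1}) |x - y|)` for nonneg `x, y`. -/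
private lemma rpow_diff_le (α : ℝ) (hα : 1 ≤ α) :
    ∀ x y : ℝ, 0 ≤ x → 0 ≤ y →
      |x ^ α - y ^ α| ≤ α * ((x ^ (α - 1) + y ^ (α - 1)) * |x - y|) := by
  have key : ∀ x y : ℝ, 0 ≤ y → y ≤ x → x ^ α - y ^ α ≤ α * (x ^ (α - 1) * (x - y)) := by
    intro x y hy hyx
    rcases eq_or_lt_of_le (hy.trans hyx) with hx0 | hx0
    · have hx : x = 0 := hx0.symm
      have hy0 : y = 0 := le_antisymm (hx ▸ hyx) hy
      simp [hx, hy0]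
    · have hxne : x ≠ 0 := hx0.ne'
      have hs : (-1 : ℝ) ≤ y / x - 1 := by
        have : (0:ℝ) ≤ y / x := div_nonneg hy hx0.le
        linarith
      have hB := one_add_mul_self_le_rpow_one_add hs hα
      have h1 : (1 : ℝ) + (y / x - 1) = y / x := by ring
      rw [h1, Real.div_rpow hy hx0.le] at hB
      have hxa : (0:ℝ) < x ^ α := Real.rpow_pos_of_pos hx0 α
      have key := mul_le_mul_of_nonneg_right hB hxa.le
      rw [div_mul_cancel₀ _ hxa.ne'] at key
      have h3 : x ^ (α - 1) * x = x ^ α := by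
        rw [← Real.rpow_add_one hxne (α - 1)]
        norm_num
      have h4 : y / x * x ^ α = y * x ^ (α - 1) := by
        rw [← h3]; field_simp
      have expand : (1 + α * (y / x - 1)) * x ^ α
          = x ^ α + α * (y / x * x ^ α) - α * x ^ α := by ring
      rw [expand, h4] at key
      have h5 : α * (x ^ (α - 1) * (x - y)) = α * x ^ α - α * (y * x ^ (α - 1)) := by
        rw [← h3]; ring
      linarith
  intro x y hx hy
  rcases le_total y x with h | h
  · rw [abs_of_nonneg (sub_nonneg.2 (Real.rpow_le_rpow hy h (by linarith))),
      abs_of_nonneg (sub_nonneg.2 h)]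
    have h1 := key x y hy h
    have h2 : 0 ≤ α * (y ^ (α - 1) * (x - y)) :=
      mul_nonneg (by linarith) (mul_nonneg (Real.rpow_nonneg hy _) (by linarith))
    nlinarith [h1, h2]
  · rw [abs_sub_comm (x ^ α), abs_sub_comm x]
    rw [abs_of_nonneg (sub_nonneg.2 (Real.rpow_le_rpow hx h (by linarith))),
      abs_of_nonneg (sub_nonneg.2 h)]
    have h1 := key y x hx h
    have h2 : 0 ≤ α * (x ^ (α - 1) * (y - x)) :=
      mul_nonneg (by linarith) (mul_nonneg (Real.rpow_nonneg hx _) (by linarith))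
    nlinarith [h1, h2]

/-- Sobolev inequality upgrade: condition `S_d` implies the `L^{pd/(d-p)}`-bound by
the `D(p)`-seminorm, for finitely supported functions. -/
theorem sobolev_Sd_to_Dp {G : Type*} [Group G] (S : Finset G)
    (hS_symm : ∀ s ∈ S, s⁻¹ ∈ S) (hS_gen : Subgroup.closure (S : Set G) = ⊤)
    (p d : ℝ) (hp : 1 < p) (hpd : p < d)
    (C : ℝ) (hC : 0 < C)
    (hSd : ∀ f : G → ℝ, (Function.support f).Finite →
      (∑' g : G, |f g| ^ (d / (d - 1))) ^ ((d - 1) / d) ≤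
        C * ∑' g : G, ∑ s ∈ S, |f (g * s⁻¹) - f g|) :
    ∃ C' : ℝ, 0 < C' ∧ ∀ f : G → ℝ, (Function.support f).Finite →
      (∑' g : G, |f g| ^ (p * d / (d - p))) ^ ((d - p) / (p * d)) ≤
        C' * (∑ s ∈ S, ∑' g : G, |f (g * s⁻¹) - f g| ^ p) ^ (1 / p) := by
  classical
  have hd1 : (1:ℝ) < d := hp.trans hpd
  have hdp : (0:ℝ) < d - p := sub_pos.2 hpd
  have hd0 : (0:ℝ) < d := by linarith
  have hp0 : (0:ℝ) < p := by linarith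
  have hp1 : (0:ℝ) < p - 1 := by linarith
  have hd1' : (0:ℝ) < d - 1 := by linarith
  set q : ℝ := p * d / (d - p) with hqdef
  set α : ℝ := p * (d - 1) / (d - p) with hαdef
  have hα1 : 1 < α := by
    rw [hαdef, lt_div_iff₀ hdp]; nlinarith
  have hα0 : (0:ℝ) < α := lt_trans one_pos hα1
  have hq0 : (0:ℝ) < q := by rw [hqdef]; exact div_pos (by positivity) hdp
  have hpq : p.HolderConjugate (p / (p - 1)) := Real.HolderConjugate.conjExponent hp
  have hqp : (p / (p - 1)).HolderConjugate p := hpq.symm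
  have hαq : (α - 1) * (p / (p - 1)) = q := by
    rw [hαdef, hqdef]; field_simp; ring
  have hαdq : α * (d / (d - 1)) = q := by
    rw [hαdef, hqdef]; field_simp
  have hγ : 1 / (p / (p - 1)) = (p - 1) / p := one_div_div _ _
  refine ⟨2 * C * α * ((S.card : ℝ) + 1) ^ ((p - 1) / p),
    mul_pos (mul_pos (mul_pos two_pos hC) hα0)
      (Real.rpow_pos_of_pos (by positivity) _), ?_⟩
  intro f hf
  set T : Finset G := hf.toFinset ∪ (hf.toFinset ×ˢ S).image (fun x => x.1 * x.2) with hTdef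
  have hmemT : ∀ g : G, g ∉ T → f g = 0 ∧ ∀ s ∈ S, f (g * s⁻¹) = 0 := by
    intro g hg
    constructor
    · by_contra h
      exact hg (Finset.mem_union_left _ (hf.mem_toFinset.2 h))
    · intro s hs
      by_contra h
      exact hg (Finset.mem_union_right _ (Finset.mem_image.2
        ⟨(g * s⁻¹, s), Finset.mem_product.2 ⟨hf.mem_toFinset.2 h, hs⟩,
          inv_mul_cancel_right g s⟩))
  set A : ℝ := ∑' g : G, |f g| ^ q with hAdef
  set Dp : ℝ := ∑ s ∈ S, ∑' g : G, |f (g * s⁻¹) - f g| ^ p with hDdef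
  have hA0 : 0 ≤ A := tsum_nonneg fun g => Real.rpow_nonneg (abs_nonneg _) _
  have hD0 : 0 ≤ Dp :=
    Finset.sum_nonneg fun s _ => tsum_nonneg fun g => Real.rpow_nonneg (abs_nonneg _) _
  -- apply S_d to |f|^α
  have hhfin : (Function.support fun g : G => |f g| ^ α).Finite := by
    apply hf.subset
    intro g hg
    simp only [Function.mem_support] at hg ⊢
    intro h0
    exact hg (by rw [h0, abs_zero, Real.zero_rpow hα0.ne'])
  have H1 := hSd (fun g => |f g| ^ α) hhfin
  have hL : (∑' g : G, |(|f g| ^ α)| ^ (d / (d - 1))) = A := by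
    rw [hAdef]
    refine tsum_congr fun g => ?_
    rw [abs_of_nonneg (Real.rpow_nonneg (abs_nonneg _) _),
      ← Real.rpow_mul (abs_nonneg _), hαdq]
  rw [hL] at H1
  -- the RHS tsum as a finite sum
  have hRsum : (∑' g : G, ∑ s ∈ S, |(|f (g * s⁻¹)| ^ α - |f g| ^ α)|)
      = ∑ g ∈ T, ∑ s ∈ S, |(|f (g * s⁻¹)| ^ α - |f g| ^ α)| := by
    refine tsum_eq_sum fun g hg => Finset.sum_eq_zero fun s hs => ?_
    rw [(hmemT g hg).1, (hmemT g hg).2 s hs]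
    simp [Real.zero_rpow hα0.ne']
  rw [hRsum] at H1
  -- shifted and fixed sums equal A
  have hshift : ∀ s ∈ S, (∑ g ∈ T, |f (g * s⁻¹)| ^ q) = A := by
    intro s hs
    have h1 : (∑' g : G, |f (g * s⁻¹)| ^ q) = ∑ g ∈ T, |f (g * s⁻¹)| ^ q :=
      tsum_eq_sum fun g hg => by
        rw [(hmemT g hg).2 s hs]; simp [Real.zero_rpow hq0.ne']
    have h2 : (∑' g : G, |f (g * s⁻¹)| ^ q) = ∑' g : G, |f g| ^ q :=
      (Equiv.mulRight s⁻¹).tsum_eq fun g => |f g| ^ q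
    rw [← h1, h2, hAdef]
  have hfixed : (∑ g ∈ T, |f g| ^ q) = A := by
    rw [hAdef]
    exact (tsum_eq_sum fun g hg => by
      rw [(hmemT g hg).1]; simp [Real.zero_rpow hq0.ne']).symm
  have hDp : ∀ s ∈ S,
      (∑' g : G, |f (g * s⁻¹) - f g| ^ p) = ∑ g ∈ T, |f (g * s⁻¹) - f g| ^ p := by
    intro s hs
    exact tsum_eq_sum fun g hg => by
      rw [(hmemT g hg).1, (hmemT g hg).2 s hs]; simp [Real.zero_rpow hp0.ne']
  -- Hölder input sums
  have hu1 : (∑ x ∈ T ×ˢ S, (|f (x.1 * x.2⁻¹)| ^ (α - 1)) ^ (p / (p - 1)))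
      = (S.card : ℝ) * A := by
    have e : ∀ x : G × G, (|f (x.1 * x.2⁻¹)| ^ (α - 1)) ^ (p / (p - 1))
        = |f (x.1 * x.2⁻¹)| ^ q := fun x => by
      rw [← Real.rpow_mul (abs_nonneg _), hαq]
    rw [Finset.sum_congr rfl fun x _ => e x, Finset.sum_product, Finset.sum_comm,
      Finset.sum_congr rfl hshift, Finset.sum_const, nsmul_eq_mul]
  have hu2 : (∑ x ∈ T ×ˢ S, (|f x.1| ^ (α - 1)) ^ (p / (p - 1))) = (S.card : ℝ) * A := by
    have e : ∀ x : G × G, (|f x.1| ^ (α - 1)) ^ (p / (p - 1)) = |f x.1| ^ q := fun x => by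
      rw [← Real.rpow_mul (abs_nonneg _), hαq]
    rw [Finset.sum_congr rfl fun x _ => e x, Finset.sum_product]
    simp only [Finset.sum_const, nsmul_eq_mul]
    rw [← Finset.mul_sum, hfixed]
  have hv : (∑ x ∈ T ×ˢ S, |f (x.1 * x.2⁻¹) - f x.1| ^ p) = Dp := by
    rw [Finset.sum_product, Finset.sum_comm, hDdef]
    exact Finset.sum_congr rfl fun s hs => (hDp s hs).symm
  have hcardA : (S.card : ℝ) * A ≤ ((S.card : ℝ) + 1) * A :=
    mul_le_mul_of_nonneg_right (by linarith) hA0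
  have hbase0 : (0:ℝ) ≤ ((S.card : ℝ) + 1) * A := mul_nonneg (by positivity) hA0
  have hexp0 : (0:ℝ) ≤ (p - 1) / p := div_nonneg hp1.le hp0.le
  -- Hölder
  have holder1 : (∑ x ∈ T ×ˢ S, |f (x.1 * x.2⁻¹)| ^ (α - 1) * |f (x.1 * x.2⁻¹) - f x.1|)
      ≤ (((S.card : ℝ) + 1) * A) ^ ((p - 1) / p) * Dp ^ (1 / p) := by
    have h := Real.inner_le_Lp_mul_Lq_of_nonneg (T ×ˢ S) hqp
      (f := fun x : G × G => |f (x.1 * x.2⁻¹)| ^ (α - 1))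
      (g := fun x : G × G => |f (x.1 * x.2⁻¹) - f x.1|)
      (fun i _ => Real.rpow_nonneg (abs_nonneg _) _) (fun i _ => abs_nonneg _)
    rw [hu1, hv, hγ] at h
    refine h.trans ?_
    refine mul_le_mul_of_nonneg_right ?_ (Real.rpow_nonneg hD0 _)
    exact Real.rpow_le_rpow (mul_nonneg (by positivity) hA0) hcardA hexp0
  have holder2 : (∑ x ∈ T ×ˢ S, |f x.1| ^ (α - 1) * |f (x.1 * x.2⁻¹) - f x.1|)
      ≤ (((S.card : ℝ) + 1) * A) ^ ((p - 1) / p) * Dp ^ (1 / p) := by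
    have h := Real.inner_le_Lp_mul_Lq_of_nonneg (T ×ˢ S) hqp
      (f := fun x : G × G => |f x.1| ^ (α - 1))
      (g := fun x : G × G => |f (x.1 * x.2⁻¹) - f x.1|)
      (fun i _ => Real.rpow_nonneg (abs_nonneg _) _) (fun i _ => abs_nonneg _)
    rw [hu2, hv, hγ] at h
    refine h.trans ?_
    refine mul_le_mul_of_nonneg_right ?_ (Real.rpow_nonneg hD0 _)
    exact Real.rpow_le_rpow (mul_nonneg (by positivity) hA0) hcardA hexp0
  -- combine
  have hR2 : (∑ g ∈ T, ∑ s ∈ S, |(|f (g * s⁻¹)| ^ α - |f g| ^ α)|)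
      ≤ 2 * α * ((((S.card : ℝ) + 1) * A) ^ ((p - 1) / p) * Dp ^ (1 / p)) := by
    calc (∑ g ∈ T, ∑ s ∈ S, |(|f (g * s⁻¹)| ^ α - |f g| ^ α)|)
        ≤ ∑ g ∈ T, ∑ s ∈ S,
            (α * (|f (g * s⁻¹)| ^ (α - 1) * |f (g * s⁻¹) - f g|)
              + α * (|f g| ^ (α - 1) * |f (g * s⁻¹) - f g|)) := by
          refine Finset.sum_le_sum fun g _ => Finset.sum_le_sum fun s _ => ?_
          refine le_trans (rpow_diff_le α hα1.le _ _ (abs_nonneg _) (abs_nonneg _)) ?_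
          have habs : |(|f (g * s⁻¹)| - |f g|)| ≤ |f (g * s⁻¹) - f g| :=
            abs_abs_sub_abs_le_abs_sub _ _
          have hb : (0:ℝ) ≤ |f (g * s⁻¹)| ^ (α - 1) + |f g| ^ (α - 1) :=
            add_nonneg (Real.rpow_nonneg (abs_nonneg _) _) (Real.rpow_nonneg (abs_nonneg _) _)
          have h6 := mul_le_mul_of_nonneg_left
            (mul_le_mul_of_nonneg_left habs hb) hα0.le
          have h7 : α * ((|f (g * s⁻¹)| ^ (α - 1) + |f g| ^ (α - 1)) * |f (g * s⁻¹) - f g|)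
              = α * (|f (g * s⁻¹)| ^ (α - 1) * |f (g * s⁻¹) - f g|)
                + α * (|f g| ^ (α - 1) * |f (g * s⁻¹) - f g|) := by ring
          linarith [h6, h7.le, h7.ge]
      _ = α * (∑ x ∈ T ×ˢ S, |f (x.1 * x.2⁻¹)| ^ (α - 1) * |f (x.1 * x.2⁻¹) - f x.1|)
            + α * (∑ x ∈ T ×ˢ S, |f x.1| ^ (α - 1) * |f (x.1 * x.2⁻¹) - f x.1|) := by
          rw [Finset.sum_product, Finset.sum_product, Finset.mul_sum, Finset.mul_sum,
            ← Finset.sum_add_distrib]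
          refine Finset.sum_congr rfl fun g _ => ?_
          rw [Finset.mul_sum, Finset.mul_sum, ← Finset.sum_add_distrib]
      _ ≤ α * ((((S.card : ℝ) + 1) * A) ^ ((p - 1) / p) * Dp ^ (1 / p))
            + α * ((((S.card : ℝ) + 1) * A) ^ ((p - 1) / p) * Dp ^ (1 / p)) :=
          add_le_add (mul_le_mul_of_nonneg_left holder1 hα0.le)
            (mul_le_mul_of_nonneg_left holder2 hα0.le)
      _ = 2 * α * ((((S.card : ℝ) + 1) * A) ^ ((p - 1) / p) * Dp ^ (1 / p)) := by ring
  have hfinal : A ^ ((d - 1) / d)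
      ≤ (2 * C * α * ((S.card : ℝ) + 1) ^ ((p - 1) / p))
          * (A ^ ((p - 1) / p) * Dp ^ (1 / p)) := by
    refine H1.trans ?_
    refine (mul_le_mul_of_nonneg_left hR2 hC.le).trans_eq ?_
    rw [Real.mul_rpow (by positivity) hA0]
    ring
  rcases eq_or_lt_of_le hA0 with hA | hApos
  · rw [← hA, Real.zero_rpow (ne_of_gt (div_pos hdp (by positivity)))]
    exact mul_nonneg
      (mul_pos (mul_pos (mul_pos two_pos hC) hα0)
        (Real.rpow_pos_of_pos (by positivity) _)).le
      (Real.rpow_nonneg hD0 _)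
  · have hsplit : A ^ ((d - 1) / d) = A ^ ((d - p) / (p * d)) * A ^ ((p - 1) / p) := by
      rw [← Real.rpow_add hApos]
      congr 1
      field_simp
      ring
    rw [hsplit] at hfinal
    have hAg : (0:ℝ) < A ^ ((p - 1) / p) := Real.rpow_pos_of_pos hApos _
    refine le_of_mul_le_mul_right ?_ hAg
    calc A ^ ((d - p) / (p * d)) * A ^ ((p - 1) / p)
        ≤ (2 * C * α * ((S.card : ℝ) + 1) ^ ((p - 1) / p))
            * (A ^ ((p - 1) / p) * Dp ^ (1 / p)) := hfinal
      _ = 2 * C * α * ((S.card : ℝ) + 1) ^ ((p - 1) / p) * Dp ^ (1 / p)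
            * A ^ ((p - 1) / p) := by ring
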